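/- Let n : ℕ, β : ℝ, and set p = 1/(1 + exp β). Let C be a unitary matrix in Matrix (Fin n → Fin 2) (Fin n → Fin 2) ℂ, let H_NI be the diagonal matrix whose diagonal entry at x is the Hamming weight |x|, and let H = C * H_NI * Cᴴ. Then for every bit string x, the diagonal entry at (x,x) of the Gibbs state exp(-β • H) / trace(exp(-β • H)) equals ∑_{r : Fin n → Fin 2} (∏_{i} (if r i = 1 then p else 1 - p)) · ‖C x r‖², where ‖·‖² denotes the squared complex absolute value (normSq) of the matrix entry C x r. That is, the computational-basis measurement distribution of the Gibbs state is the output distribution of the circuit C on inputs drawn from independent Bernoulli(p) bit-flips of 0ⁿ. -/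

import Mathlib

open Matrix NormedSpace

/-- The computational-basis measurement distribution of the Gibbs state of the
parent Hamiltonian `H = C * H_NI * Cᴴ` is the output distribution of the circuit `C`
on inputs drawn from independent Bernoulli(p) bit flips of `0ⁿ`, `p = 1/(1 + exp β)`. -/
theorem gibbs_measurement_distribution (n : ℕ) (β : ℝ) (p : ℝ)
    (hp : p = 1 / (1 + Real.exp β))
    (C : Matrix (Fin n → Fin 2) (Fin n → Fin 2) ℂ)
    (hC : C ∈ Matrix.unitaryGroup (Fin n → Fin 2) ℂ)
    (H_NI : Matrix (Fin n → Fin 2) (Fin n → Fin 2) ℂ)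
    (hH : H_NI = Matrix.diagonal fun x =>
      ((Finset.univ.filter fun i => x i = 1).card : ℂ))
    (H : Matrix (Fin n → Fin 2) (Fin n → Fin 2) ℂ)
    (hHdef : H = C * H_NI * Cᴴ) :
    ∀ x : Fin n → Fin 2,
      ((NormedSpace.exp ((-β) • H)).trace⁻¹ • NormedSpace.exp ((-β) • H)) x x =
        ((∑ r : Fin n → Fin 2,
          (∏ i : Fin n, (if r i = 1 then p else 1 - p)) * Complex.normSq (C x r) : ℝ) : ℂ) := by
  intro x
  set q : ℝ := Real.exp (-β) with hqdef
  have hqpos : 0 < q := Real.exp_pos _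
  -- the Hamming weight as a real number
  set c : (Fin n → Fin 2) → ℕ := fun r => (Finset.univ.filter fun i => r i = 1).card with hc
  set e : (Fin n → Fin 2) → ℝ := fun r => q ^ (c r) with he
  -- step 1: exponential of conjugated Hamiltonian
  set U : (Matrix (Fin n → Fin 2) (Fin n → Fin 2) ℂ)ˣ := Unitary.toUnits ⟨C, hC⟩ with hU
  have hUval : (U : Matrix (Fin n → Fin 2) (Fin n → Fin 2) ℂ) = C := rfl
  have hUinv : ((U⁻¹ : _ˣ) : Matrix (Fin n → Fin 2) (Fin n → Fin 2) ℂ) = Cᴴ := rfl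
  have hsmul : (-β) • H = C * ((-β) • H_NI) * Cᴴ := by
    rw [hHdef, Matrix.mul_smul, Matrix.smul_mul]
  have hdiag : (-β) • H_NI = Matrix.diagonal (fun r => ((-β : ℝ) : ℂ) * (c r : ℂ)) := by
    rw [hH]
    ext i j
    by_cases h : i = j <;>
      simp [Matrix.diagonal_apply, h, Complex.real_smul, hc]
  have hexp : NormedSpace.exp ((-β) • H)
      = C * Matrix.diagonal (fun r => ((e r : ℝ) : ℂ)) * Cᴴ := by
    rw [hsmul, hdiag, ← hUinv, ← hUval, Matrix.exp_units_conj, hUval, hUinv,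
      Matrix.exp_diagonal, Pi.exp_def]
    have hfun : ∀ r : Fin n → Fin 2,
        NormedSpace.exp (((-β : ℝ) : ℂ) * (c r : ℂ)) = ((e r : ℝ) : ℂ) := by
      intro r
      rw [← Complex.exp_eq_exp_ℂ]
      have h1 : ((-β : ℝ) : ℂ) * (c r : ℂ) = (((-β) * (c r) : ℝ) : ℂ) := by push_cast; ring
      rw [h1, ← Complex.ofReal_exp]
      norm_cast
      rw [he]
      simp only [hqdef]
      rw [← Real.exp_nat_mul]
      ring_nf
    simp only [hfun]
  -- step 2: trace
  have hstar : Cᴴ * C = 1 := by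
    have := hC.1
    rwa [Matrix.star_eq_conjTranspose] at this
  have htrace : (NormedSpace.exp ((-β) • H)).trace
      = ∑ r : Fin n → Fin 2, ((e r : ℝ) : ℂ) := by
    rw [hexp, Matrix.trace_mul_cycle, hstar, Matrix.one_mul, Matrix.trace_diagonal]
  -- step 3: diagonal entry
  have hentry : (NormedSpace.exp ((-β) • H)) x x
      = ∑ r : Fin n → Fin 2, ((e r * Complex.normSq (C x r) : ℝ) : ℂ) := by
    rw [hexp]
    rw [Matrix.mul_apply]
    refine Finset.sum_congr rfl fun r _ => ?_
    rw [Matrix.mul_diagonal, Matrix.conjTranspose_apply, Complex.star_def]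
    have : C x r * ((e r : ℝ) : ℂ) * (starRingEnd ℂ) (C x r)
        = ((e r : ℝ) : ℂ) * (C x r * (starRingEnd ℂ) (C x r)) := by ring
    rw [this, Complex.mul_conj]
    push_cast
    ring
  -- step 4: real arithmetic
  set Z : ℝ := ∑ r : Fin n → Fin 2, e r with hZ
  have heprod : ∀ r : Fin n → Fin 2, e r = ∏ i : Fin n, (if r i = 1 then q else 1) := by
    intro r
    rw [Finset.prod_ite, Finset.prod_const, Finset.prod_const, one_pow, mul_one, he]
  have hZval : Z = (1 + q) ^ n := by
    rw [hZ]
    have : ∀ r : Fin n → Fin 2, e r = ∏ i : Fin n, (fun (i : Fin n) (j : Fin 2) =>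
        if j = 1 then q else 1) i (r i) := fun r => heprod r
    calc ∑ r : Fin n → Fin 2, e r
        = ∑ r ∈ Fintype.piFinset (fun _ : Fin n => (Finset.univ : Finset (Fin 2))),
            ∏ i : Fin n, (fun (_ : Fin n) (j : Fin 2) => if j = 1 then q else 1) i (r i) := by
          rw [Fintype.piFinset_univ]
          exact Finset.sum_congr rfl fun r _ => this r
      _ = ∏ i : Fin n, ∑ j : Fin 2, (if j = 1 then q else 1) := by
          rw [Finset.prod_univ_sum]
      _ = (1 + q) ^ n := by
          simp [Fin.sum_univ_two, Finset.prod_const]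
  have hZpos : 0 < Z := by rw [hZval]; positivity
  have hp1 : (1 + q) * p = q := by
    rw [hp, hqdef, Real.exp_neg]
    have h1 : Real.exp β ≠ 0 := (Real.exp_pos β).ne'
    have h2 : (1 : ℝ) + Real.exp β ≠ 0 := by positivity
    field_simp
    ring
  have hp2 : (1 + q) * (1 - p) = 1 := by
    rw [hp, hqdef, Real.exp_neg]
    have h1 : Real.exp β ≠ 0 := (Real.exp_pos β).ne'
    have h2 : (1 : ℝ) + Real.exp β ≠ 0 := by positivity
    field_simp
    ring
  have hw : ∀ r : Fin n → Fin 2,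
      (∏ i : Fin n, (if r i = 1 then p else 1 - p)) = Z⁻¹ * e r := by
    intro r
    have : Z * ∏ i : Fin n, (if r i = 1 then p else 1 - p) = e r := by
      rw [hZval, heprod r]
      have : ((1 + q) ^ n : ℝ) = ∏ _i : Fin n, (1 + q) := by
        rw [Finset.prod_const, Finset.card_univ, Fintype.card_fin]
      rw [this, ← Finset.prod_mul_distrib]
      refine Finset.prod_congr rfl fun i _ => ?_
      by_cases h : r i = 1 <;> simp [h, hp1, hp2]
    field_simp at this ⊢
    linarith [this]
  -- put it together
  rw [Matrix.smul_apply, hentry, htrace, smul_eq_mul]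
  rw [← Complex.ofReal_sum, ← Complex.ofReal_sum, ← Complex.ofReal_inv, ← Complex.ofReal_mul]
  congr 1
  rw [Finset.mul_sum]
  refine Finset.sum_congr rfl fun r _ => ?_
  rw [hw r]
  ring
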